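/- arXiv:1310.2559 — 3 statements merged into one kernel-verified Lean document; each statement's English description precedes it below -/
import Mathlib

section
/- Let S_{d,r} = (1/r!) Σ_{i_1,...,i_r=1}^d Σ_{σ ∈ P_r} ⊗_{ℓ=1}^r e_{i_ℓ} e_{i_{σ(ℓ)}}ᵀ be the d^r × d^r symmetrizer matrix and T_{d,r} = (1/r) Σ_{j=1}^r (I_{d^j} ⊗ K_{d^{r−j−1},d})(I_{d^{j−1}} ⊗ K_{d,d^{r−j}}) (with convention K_{d^{−1},d} = 1). Then S_{d,r+1} = (S_{d,r} ⊗ I_d) T_{d,r+1}. -/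
open Matrix

/-- Kronecker product of real matrices, with `Fin` index arithmetic: the row index
`i < m*p` encodes the pair `(i / p, i % p)` (first factor most significant). -/
def kron {m n p q : ℕ} (A : Matrix (Fin m) (Fin n) ℝ) (B : Matrix (Fin p) (Fin q) ℝ) :
    Matrix (Fin (m * p)) (Fin (n * q)) ℝ := fun i j =>
  A ⟨i.val / p, Nat.div_lt_of_lt_mul (Nat.mul_comm m p ▸ i.isLt)⟩
    ⟨j.val / q, Nat.div_lt_of_lt_mul (Nat.mul_comm n q ▸ j.isLt)⟩ *
  B ⟨i.val % p, Nat.mod_lt _ (by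
      rcases Nat.eq_zero_or_pos p with hp | hp
      · exact absurd i.isLt (by simp [hp])
      · exact hp)⟩
    ⟨j.val % q, Nat.mod_lt _ (by
      rcases Nat.eq_zero_or_pos q with hq | hq
      · exact absurd j.isLt (by simp [hq])
      · exact hq)⟩

/-- The commutation matrix `K_{r,s}` of order `rs × rs`, characterized by
`K_{r,s} vec(M) = vec(Mᵀ)` for every `r × s` matrix `M` (column-major `vec`). -/
def commMat (r s : ℕ) : Matrix (Fin (r * s)) (Fin (r * s)) ℝ := fun a b =>
  if (a : ℕ) = (b : ℕ) / r + (b : ℕ) % r * s then 1 else 0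

/-- Cast a matrix along equalities of its `Fin` dimensions. -/
def mcast {m n m' n' : ℕ} (hm : m = m') (hn : n = n')
    (A : Matrix (Fin m) (Fin n) ℝ) : Matrix (Fin m') (Fin n') ℝ :=
  Matrix.reindex (finCongr hm) (finCongr hn) A

/-- The `ℓ`-th base-`d` digit (most significant first) of an index `a < d^k`. -/
def digit (d k : ℕ) [NeZero d] (a : Fin (d ^ k)) (ℓ : ℕ) : Fin d :=
  ⟨(a : ℕ) / d ^ (k - 1 - ℓ) % d, Nat.mod_lt _ (Nat.pos_of_ne_zero (NeZero.ne d))⟩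

/-- The `k`-fold Kronecker product `M 0 ⊗ M 1 ⊗ ⋯ ⊗ M (k-1)` of `d × d` matrices,
as a `d^k × d^k` matrix. -/
def kronPow {d : ℕ} [NeZero d] (k : ℕ) (M : Fin k → Matrix (Fin d) (Fin d) ℝ) :
    Matrix (Fin (d ^ k)) (Fin (d ^ k)) ℝ := fun a b =>
  ∏ ℓ : Fin k, M ℓ (digit d k a ℓ) (digit d k b ℓ)

/-- The `k`-fold Kronecker product `v 0 ⊗ v 1 ⊗ ⋯ ⊗ v (k-1)` of vectors in `ℝ^d`,
as a vector in `ℝ^{d^k}`. -/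
def vkron {d : ℕ} [NeZero d] (k : ℕ) (v : Fin k → (Fin d → ℝ)) : Fin (d ^ k) → ℝ :=
  fun a => ∏ ℓ : Fin k, v ℓ (digit d k a ℓ)

/-- The symmetrizer matrix
`S_{d,r} = (1/r!) Σ_{i_1,...,i_r} Σ_{σ ∈ P_r} ⊗_{ℓ=1}^r e_{i_ℓ} e_{i_{σ(ℓ)}}ᵀ`. -/
noncomputable def symr (d : ℕ) [NeZero d] (r : ℕ) :
    Matrix (Fin (d ^ r)) (Fin (d ^ r)) ℝ :=
  ((r.factorial : ℝ)⁻¹) •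
    ∑ i : Fin r → Fin d, ∑ σ : Equiv.Perm (Fin r),
      kronPow r fun ℓ => Matrix.single (i ℓ) (i (σ ℓ)) 1

/-- The matrix `T_{d,r} = (1/r) Σ_{j=1}^r (I_{d^j} ⊗ K_{d^{r−j−1},d})(I_{d^{j−1}} ⊗ K_{d,d^{r−j}})`,
with the convention `K_{d^{−1},d} = 1 ∈ ℝ` (so that the `j = r` summand's first factor is
`I_{d^r} ⊗ 1 = I_{d^r}`). -/
noncomputable def Tmat (d r : ℕ) : Matrix (Fin (d ^ r)) (Fin (d ^ r)) ℝ :=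
  ((r : ℝ)⁻¹) •
    ∑ j ∈ (Finset.Icc 1 r).attach,
      (if h : j.1 = r then (1 : Matrix (Fin (d ^ r)) (Fin (d ^ r)) ℝ)
        else mcast
          (by
            have hj := Finset.mem_Icc.mp j.2
            rw [← pow_succ d (r - j.1 - 1), ← pow_add]; congr 1; omega)
          (by
            have hj := Finset.mem_Icc.mp j.2
            rw [← pow_succ d (r - j.1 - 1), ← pow_add]; congr 1; omega)
          (kron (1 : Matrix (Fin (d ^ j.1)) (Fin (d ^ j.1)) ℝ)
            (commMat (d ^ (r - j.1 - 1)) d))) *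
      mcast
        (by
          have hj := Finset.mem_Icc.mp j.2
          rw [← pow_succ' d (r - j.1), ← pow_add]; congr 1; omega)
        (by
          have hj := Finset.mem_Icc.mp j.2
          rw [← pow_succ' d (r - j.1), ← pow_add]; congr 1; omega)
        (kron (1 : Matrix (Fin (d ^ (j.1 - 1))) (Fin (d ^ (j.1 - 1))) ℝ)
          (commMat d (d ^ (r - j.1))))



namespace SymRec

variable {d : ℕ}

/-- Base-`d` encoding of `k` digits (most significant first). -/
def encN (d : ℕ) : ℕ → (ℕ → ℕ) → ℕ
  | 0, _ => 0
  | k+1, f => encN d k f * d + f k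

@[simp] lemma encN_zero (f : ℕ → ℕ) : encN d 0 f = 0 := rfl

lemma encN_succ (k : ℕ) (f : ℕ → ℕ) : encN d (k+1) f = encN d k f * d + f k := rfl

lemma encN_congr {k : ℕ} {f g : ℕ → ℕ} (h : ∀ ℓ < k, f ℓ = g ℓ) :
    encN d k f = encN d k g := by
  induction k with
  | zero => rfl
  | succ k ih =>
    rw [encN_succ, encN_succ, ih (fun ℓ hℓ => h ℓ (by omega)), h k (by omega)]

lemma encN_lt (hd : 0 < d) {k : ℕ} {f : ℕ → ℕ} (hf : ∀ ℓ < k, f ℓ < d) :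
    encN d k f < d ^ k := by
  induction k with
  | zero => simpa using Nat.one_pos
  | succ k ih =>
    have h1 : encN d k f < d ^ k := ih (fun ℓ hℓ => hf ℓ (by omega))
    have h2 : f k < d := hf k (by omega)
    rw [encN_succ, pow_succ]
    have h3 : (encN d k f + 1) * d ≤ d ^ k * d :=
      Nat.mul_le_mul_right d (by omega)
    rw [add_mul, one_mul] at h3
    omega

lemma encN_split (s t : ℕ) (f : ℕ → ℕ) :
    encN d (s + t) f = encN d s f * d ^ t + encN d t (fun ℓ => f (s + ℓ)) := by
  induction t with
  | zero => simp
  | succ t ih =>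
    rw [show s + (t+1) = (s+t)+1 from rfl, encN_succ, ih, encN_succ, pow_succ]
    ring

lemma encN_div (hd : 0 < d) (s t : ℕ) (f : ℕ → ℕ) (hf : ∀ ℓ < s + t, f ℓ < d) :
    encN d (s + t) f / d ^ t = encN d s f := by
  rw [encN_split]
  have h : encN d t (fun ℓ => f (s + ℓ)) < d ^ t :=
    encN_lt hd (fun ℓ hℓ => hf (s + ℓ) (by omega))
  rw [mul_comm, Nat.mul_add_div (Nat.pow_pos hd), Nat.div_eq_of_lt h, Nat.add_zero]

lemma encN_mod (hd : 0 < d) (s t : ℕ) (f : ℕ → ℕ) (hf : ∀ ℓ < s + t, f ℓ < d) :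
    encN d (s + t) f % d ^ t = encN d t (fun ℓ => f (s + ℓ)) := by
  rw [encN_split]
  have h : encN d t (fun ℓ => f (s + ℓ)) < d ^ t :=
    encN_lt hd (fun ℓ hℓ => hf (s + ℓ) (by omega))
  rw [Nat.mul_add_mod', Nat.mod_eq_of_lt h]

lemma encN_digit (hd : 0 < d) {k : ℕ} (f : ℕ → ℕ) (hf : ∀ ℓ < k, f ℓ < d)
    {ℓ : ℕ} (hℓ : ℓ < k) : encN d k f / d ^ (k - 1 - ℓ) % d = f ℓ := by
  obtain ⟨t, ht⟩ : ∃ t, k - 1 - ℓ = t := ⟨_, rfl⟩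
  rw [ht]
  rw [show k = (ℓ + 1) + t by omega] at hf ⊢
  rw [encN_div hd _ _ _ hf, encN_succ, Nat.mul_add_mod', Nat.mod_eq_of_lt (hf ℓ (by omega))]

lemma encN_dec (hd : 0 < d) {k a : ℕ} (ha : a < d ^ k) :
    encN d k (fun ℓ => a / d ^ (k - 1 - ℓ) % d) = a := by
  induction k generalizing a with
  | zero =>
    simp only [encN_zero]
    simp only [pow_zero] at ha
    omega
  | succ k ih =>
    rw [encN_succ]
    have h1 : ∀ ℓ < k, a / d ^ (k + 1 - 1 - ℓ) % d = (a / d) / d ^ (k - 1 - ℓ) % d := by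
      intro ℓ hℓ
      have he : k + 1 - 1 - ℓ = (k - 1 - ℓ) + 1 := by omega
      rw [he, pow_succ', ← Nat.div_div_eq_div_mul]
    have h2 : encN d k (fun ℓ => a / d ^ (k + 1 - 1 - ℓ) % d)
        = encN d k (fun ℓ => (a / d) / d ^ (k - 1 - ℓ) % d) :=
      encN_congr (fun ℓ hℓ => h1 ℓ hℓ)
    have h3 : a / d < d ^ k := by
      rw [Nat.div_lt_iff_lt_mul hd, ← pow_succ]
      exact ha
    rw [h2, ih h3]
    have h4 : k + 1 - 1 - k = 0 := by omega
    rw [h4, pow_zero, Nat.div_one]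
    exact Nat.div_add_mod' a d

end SymRec
namespace SymRec

variable {d : ℕ} [NeZero d]

lemma dpos : 0 < d := Nat.pos_of_ne_zero (NeZero.ne d)

/-- `ℕ`-valued digit function of `f`. -/
def fv {k : ℕ} (f : Fin k → Fin d) : ℕ → ℕ := fun ℓ => if h : ℓ < k then (f ⟨ℓ, h⟩ : ℕ) else 0

lemma fv_lt {k : ℕ} (f : Fin k → Fin d) : ∀ ℓ < k, fv f ℓ < d := by
  intro ℓ hℓ
  simp only [fv, dif_pos hℓ]
  exact (f ⟨ℓ, hℓ⟩).isLt

lemma fv_eq {k : ℕ} (f : Fin k → Fin d) {ℓ : ℕ} (hℓ : ℓ < k) : fv f ℓ = f ⟨ℓ, hℓ⟩ := by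
  simp [fv, dif_pos hℓ]

/-- Encode a digit string as an element of `Fin (d ^ k)`. -/
def en {k : ℕ} (f : Fin k → Fin d) : Fin (d ^ k) := ⟨encN d k (fv f), encN_lt dpos (fv_lt f)⟩

lemma en_val {k : ℕ} (f : Fin k → Fin d) : (en f : ℕ) = encN d k (fv f) := rfl

lemma digit_en {k : ℕ} (f : Fin k → Fin d) (ℓ : Fin k) : digit d k (en f) ℓ = f ℓ := by
  apply Fin.ext
  show encN d k (fv f) / d ^ (k - 1 - (ℓ : ℕ)) % d = f ℓ
  rw [encN_digit dpos (fv f) (fv_lt f) ℓ.isLt, fv_eq f ℓ.isLt]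

lemma digit_ext {k : ℕ} {a b : Fin (d ^ k)}
    (h : ∀ ℓ : Fin k, digit d k a ℓ = digit d k b ℓ) : a = b := by
  apply Fin.ext
  rw [← encN_dec (d := d) dpos a.isLt, ← encN_dec (d := d) dpos b.isLt]
  exact encN_congr (fun ℓ hℓ => congrArg Fin.val (h ⟨ℓ, hℓ⟩))

lemma en_surj {k : ℕ} : Function.Surjective (en (d := d) (k := k)) := by
  intro a
  refine ⟨fun ℓ => digit d k a ℓ, digit_ext fun ℓ => ?_⟩
  rw [digit_en]

lemma mat_ext {k : ℕ} {A B : Matrix (Fin (d ^ k)) (Fin (d ^ k)) ℝ}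
    (h : ∀ f g : Fin k → Fin d, A (en f) (en g) = B (en f) (en g)) : A = B := by
  funext a b
  obtain ⟨f, rfl⟩ := en_surj a
  obtain ⟨g, rfl⟩ := en_surj b
  exact h f g

/-- The permutation matrix associated to a permutation of digit positions. -/
def pmat (d : ℕ) [NeZero d] (R : ℕ) (τ : Equiv.Perm (Fin R)) :
    Matrix (Fin (d ^ R)) (Fin (d ^ R)) ℝ :=
  fun a b => if ∀ ℓ : Fin R, digit d R a ℓ = digit d R b (τ ℓ) then 1 else 0

lemma pmat_en {R : ℕ} (τ : Equiv.Perm (Fin R)) (f g : Fin R → Fin d) :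
    pmat d R τ (en f) (en g) = if ∀ ℓ, f ℓ = g (τ ℓ) then 1 else 0 := by
  simp only [pmat, digit_en]

lemma pmat_refl {R : ℕ} : pmat d R (Equiv.refl _) = 1 := by
  funext a b
  rw [Matrix.one_apply]
  refine if_congr ⟨fun h => digit_ext h, fun h => by subst h; exact fun _ => rfl⟩ rfl rfl

lemma pmat_congr {R : ℕ} {τ ρ : Equiv.Perm (Fin R)} (h : ∀ ℓ, τ ℓ = ρ ℓ) :
    pmat d R τ = pmat d R ρ := by
  have : τ = ρ := Equiv.ext h
  rw [this]

lemma pmat_mul {R : ℕ} (τ ρ : Equiv.Perm (Fin R)) :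
    pmat d R τ * pmat d R ρ = pmat d R (τ.trans ρ) := by
  funext a b
  rw [Matrix.mul_apply]
  set c₀ : Fin (d ^ R) := en (fun ℓ => digit d R b (ρ ℓ)) with hc₀
  rw [Finset.sum_eq_single_of_mem c₀ (Finset.mem_univ _)]
  · have h1 : pmat d R ρ c₀ b = 1 := by
      rw [hc₀]
      simp [pmat, digit_en]
    rw [h1, mul_one]
    simp only [pmat, hc₀, digit_en, Equiv.trans_apply]
    exact if_congr Iff.rfl rfl rfl
  · intro c _ hc
    have h2 : pmat d R ρ c b = 0 := by
      simp only [pmat]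
      rw [if_neg]
      intro hcon
      exact hc (digit_ext (fun ℓ => by rw [hcon ℓ, hc₀, digit_en]))
    rw [h2, mul_zero]

end SymRec
namespace SymRec

variable {d : ℕ} [NeZero d]

lemma symr_eq (k : ℕ) :
    symr d k = ((k.factorial : ℝ))⁻¹ • ∑ σ : Equiv.Perm (Fin k), pmat d k σ := by
  have key : ∀ σ : Equiv.Perm (Fin k),
      ∑ i : Fin k → Fin d, kronPow k (fun ℓ => Matrix.single (i ℓ) (i (σ ℓ)) 1)
        = pmat d k σ⁻¹ := by
    intro σ
    apply mat_ext
    intro f g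
    rw [Matrix.sum_apply]
    have h1 : ∀ i : Fin k → Fin d,
        kronPow k (fun ℓ => Matrix.single (i ℓ) (i (σ ℓ)) 1) (en f) (en g)
          = if i = f ∧ ∀ ℓ, f ℓ = g (σ⁻¹ ℓ) then (1:ℝ) else 0 := by
      intro i
      have hcond : (∀ ℓ, i ℓ = f ℓ ∧ i (σ ℓ) = g ℓ) ↔ (i = f ∧ ∀ ℓ, f ℓ = g (σ⁻¹ ℓ)) := by
        constructor
        · intro h
          have hif : i = f := funext fun ℓ => (h ℓ).1
          subst hif
          refine ⟨rfl, fun ℓ => ?_⟩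
          have h2 := (h (σ⁻¹ ℓ)).2
          rwa [Equiv.Perm.coe_inv, Equiv.apply_symm_apply] at h2
        · rintro ⟨rfl, h⟩
          intro ℓ
          exact ⟨rfl, by rw [h (σ ℓ), Equiv.Perm.coe_inv, Equiv.symm_apply_apply]⟩
      simp only [kronPow, digit_en, Matrix.single, Matrix.of_apply]
      rw [Finset.prod_boole]
      simp only [Finset.mem_univ, forall_true_left, true_implies]
      exact if_congr hcond rfl rfl
    simp only [h1]
    rw [pmat_en]
    by_cases hC : ∀ ℓ, f ℓ = g (σ⁻¹ ℓ)
    · simp [hC, Finset.sum_ite_eq']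
    · simp only [hC, and_false, if_false, Finset.sum_const_zero]
  unfold symr
  congr 1
  rw [Finset.sum_comm]
  calc ∑ σ : Equiv.Perm (Fin k), ∑ i : Fin k → Fin d,
        kronPow k (fun ℓ => Matrix.single (i ℓ) (i (σ ℓ)) 1)
      = ∑ σ : Equiv.Perm (Fin k), pmat d k σ⁻¹ :=
        Finset.sum_congr rfl (fun σ _ => key σ)
    _ = ∑ σ : Equiv.Perm (Fin k), pmat d k σ :=
        Fintype.sum_equiv (Equiv.inv (Equiv.Perm (Fin k))) _ _ (fun σ => rfl)

end SymRec
namespace SymRec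

variable {d : ℕ}

lemma encN_inj (hd : 0 < d) {k : ℕ} {f g : ℕ → ℕ} (hf : ∀ ℓ < k, f ℓ < d)
    (hg : ∀ ℓ < k, g ℓ < d) :
    encN d k f = encN d k g ↔ ∀ ℓ < k, f ℓ = g ℓ := by
  constructor
  · intro h ℓ hℓ
    rw [← encN_digit hd f hf hℓ, ← encN_digit hd g hg hℓ, h]
  · exact encN_congr

/-- The block-swap of positions: fixes `[0,s)`, sends `[s, s+t)` up by `u` and
`[s+t, s+t+u)` down by `t`. -/
def bswN (s t u m : ℕ) : ℕ := if m < s then m else if m < s + t then m + u else m - t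

lemma bswN_lt {R s t u : ℕ} (h : s + t + u = R) {m : ℕ} (hm : m < R) : bswN s t u m < R := by
  unfold bswN; split_ifs <;> omega

def bsw (R s t u : ℕ) (h : s + t + u = R) : Equiv.Perm (Fin R) where
  toFun ℓ := ⟨bswN s t u ℓ.1, bswN_lt h ℓ.isLt⟩
  invFun ℓ := ⟨bswN s u t ℓ.1, bswN_lt (by omega) ℓ.isLt⟩
  left_inv ℓ := by
    apply Fin.ext
    have hℓ := ℓ.isLt
    simp only [bswN]
    split_ifs <;> omega
  right_inv ℓ := by
    apply Fin.ext
    have hℓ := ℓ.isLt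
    simp only [bswN]
    split_ifs <;> omega

lemma bsw_apply {R s t u : ℕ} (h : s + t + u = R) (ℓ : Fin R) :
    ((bsw R s t u h) ℓ : ℕ) = bswN s t u ℓ.1 := rfl

/-- Pure arithmetic form of the `(I ⊗ K)` condition. -/
lemma comm_cond (hd : 0 < d) (s t u R : ℕ) (h : s + t + u = R) (F G : ℕ → ℕ)
    (hF : ∀ ℓ < R, F ℓ < d) (hG : ∀ ℓ < R, G ℓ < d) :
    (encN d R F / (d ^ t * d ^ u) = encN d R G / (d ^ t * d ^ u) ∧
      encN d R F % (d ^ t * d ^ u) =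
        (encN d R G % (d ^ t * d ^ u)) / d ^ t +
          (encN d R G % (d ^ t * d ^ u)) % d ^ t * d ^ u)
      ↔ ∀ m < R, F m = G (bswN s t u m) := by
  subst h
  rw [← pow_add d t u]
  have e1 : s + t + u = s + (t + u) := by omega
  rw [e1] at hF hG ⊢
  rw [encN_div hd s (t+u) F hF, encN_mod hd s (t+u) F hF,
      encN_div hd s (t+u) G hG, encN_mod hd s (t+u) G hG]
  have hG' : ∀ ℓ < u + t, G (s + ℓ) < d := fun ℓ hℓ => hG (s + ℓ) (by omega)
  have e2 : encN d (t + u) (fun ℓ => G (s + ℓ)) = encN d (u + t) (fun ℓ => G (s + ℓ)) := by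
    rw [show t + u = u + t from by omega]
  rw [e2, encN_div hd u t _ hG', encN_mod hd u t _ hG']
  set H : ℕ → ℕ := fun j => if j < t then G (s + u + j) else G (s + (j - t)) with hH
  have e4 : encN d u (fun ℓ => G (s + ℓ)) +
      encN d t (fun ℓ => (fun ℓ' => G (s + ℓ')) (u + ℓ)) * d ^ u = encN d (t + u) H := by
    rw [encN_split t u H]
    have e5 : encN d t H = encN d t (fun ℓ => (fun ℓ' => G (s + ℓ')) (u + ℓ)) := by
      apply encN_congr
      intro ℓ hℓ
      simp only [hH, if_pos hℓ]
      exact congrArg G (by omega)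
    have e6 : encN d u (fun ℓ => H (t + ℓ)) = encN d u (fun ℓ => G (s + ℓ)) := by
      apply encN_congr
      intro ℓ hℓ
      simp only [hH, if_neg (show ¬ t + ℓ < t from by omega)]
      exact congrArg G (by omega)
    rw [e5, e6]
    exact Nat.add_comm _ _
  rw [e4]
  have hHb : ∀ j < t + u, H j < d := by
    intro j hj
    simp only [hH]
    split_ifs <;> [exact hG _ (by omega); exact hG _ (by omega)]
  have hFs : ∀ ℓ < s, F ℓ < d := fun ℓ hℓ => hF ℓ (by omega)
  have hGs : ∀ ℓ < s, G ℓ < d := fun ℓ hℓ => hG ℓ (by omega)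
  have hF' : ∀ j < t + u, F (s + j) < d := fun j hj => hF (s + j) (by omega)
  rw [encN_inj hd hFs hGs, encN_inj hd hF' hHb]
  constructor
  · rintro ⟨h1, h2⟩ m hm
    simp only [bswN]
    by_cases c1 : m < s
    · rw [if_pos c1]; exact h1 m c1
    · rw [if_neg c1]
      have h2' := h2 (m - s) (by omega)
      rw [show s + (m - s) = m from by omega] at h2'
      by_cases c2 : m < s + t
      · rw [if_pos c2, h2']
        simp only [hH, if_pos (show m - s < t from by omega)]
        exact congrArg G (by omega)
      · rw [if_neg c2, h2']
        simp only [hH, if_neg (show ¬ m - s < t from by omega)]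
        exact congrArg G (by omega)
  · intro hmg
    constructor
    · intro ℓ hℓ
      have h3 := hmg ℓ (by omega)
      simp only [bswN, if_pos hℓ] at h3
      exact h3
    · intro j hj
      have h3 := hmg (s + j) (by omega)
      simp only [bswN, if_neg (show ¬ s + j < s from by omega)] at h3
      by_cases c : j < t
      · rw [if_pos (show s + j < s + t from by omega)] at h3
        rw [h3]
        simp only [hH, if_pos c]
        exact congrArg G (by omega)
      · rw [if_neg (show ¬ s + j < s + t from by omega)] at h3
        rw [h3]
        simp only [hH, if_neg c]
        exact congrArg G (by omega)

end SymRec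
namespace SymRec

variable {d : ℕ} [NeZero d]

lemma fv_forall_iff {R : ℕ} (f g : Fin R → Fin d) (τ : Equiv.Perm (Fin R)) (w : ℕ → ℕ)
    (hτ : ∀ ℓ : Fin R, ((τ ℓ : Fin R) : ℕ) = w ℓ.1) :
    (∀ m < R, fv f m = fv g (w m)) ↔ ∀ ℓ : Fin R, f ℓ = g (τ ℓ) := by
  constructor
  · intro h ℓ
    have h1 := h ℓ.1 ℓ.isLt
    have hw : w ℓ.1 < R := by rw [← hτ ℓ]; exact (τ ℓ).isLt
    rw [fv_eq f ℓ.isLt, fv_eq g hw] at h1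
    have h2 : τ ℓ = ⟨w ℓ.1, hw⟩ := Fin.ext (hτ ℓ)
    rw [h2]
    apply Fin.ext
    simpa using h1
  · intro h m hm
    have h1 := h ⟨m, hm⟩
    have hw : w m < R := by
      rw [show w m = w (⟨m, hm⟩ : Fin R).1 from rfl, ← hτ ⟨m, hm⟩]
      exact (τ ⟨m, hm⟩).isLt
    rw [fv_eq f hm, fv_eq g hw]
    have h2 : τ ⟨m, hm⟩ = ⟨w m, hw⟩ := Fin.ext (hτ ⟨m, hm⟩)
    rw [h1, h2]

lemma kron_one_comm (R s t u T U : ℕ) (h : s + t + u = R)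
    (hT : T = d ^ t) (hU : U = d ^ u) (hm hn : d ^ s * (T * U) = d ^ R) :
    mcast hm hn (kron (1 : Matrix (Fin (d ^ s)) (Fin (d ^ s)) ℝ) (commMat T U))
      = pmat d R (bsw R s t u h) := by
  subst hT hU
  apply mat_ext
  intro f g
  rw [pmat_en]
  have hcc := comm_cond (d := d) dpos s t u R h (fv f) (fv g) (fv_lt f) (fv_lt g)
  rw [fv_forall_iff f g (bsw R s t u h) (bswN s t u) (fun ℓ => rfl)] at hcc
  simp only [mcast, Matrix.reindex_apply, Matrix.submatrix_apply, finCongr_symm, finCongr_apply,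
    kron, commMat, Matrix.one_apply, Fin.mk.injEq, Fin.coe_cast]
  show (if (encN d R (fv f)) / (d^t * d^u) = (encN d R (fv g)) / (d^t * d^u) then (1:ℝ) else 0) *
      (if (encN d R (fv f)) % (d^t * d^u) =
          (encN d R (fv g)) % (d^t * d^u) / d^t + (encN d R (fv g)) % (d^t * d^u) % d^t * d^u
        then (1:ℝ) else 0) = _
  rw [ite_mul, one_mul, zero_mul, ← ite_and]
  exact if_congr hcc rfl rfl

end SymRec
namespace SymRec

variable {d : ℕ} [NeZero d]

lemma bsw_trans_swap {R j : ℕ} (h1 : 1 ≤ j) (h2 : j < R)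
    (ha : j + (R - j - 1) + 1 = R) (hb : (j - 1) + 1 + (R - j) = R)
    (hc : j - 1 < R) (hd' : R - 1 < R) :
    (bsw R j (R - j - 1) 1 ha).trans (bsw R (j - 1) 1 (R - j) hb)
      = Equiv.swap ⟨j - 1, hc⟩ ⟨R - 1, hd'⟩ := by
  apply Equiv.ext
  intro ℓ
  have hℓ := ℓ.isLt
  apply Fin.ext
  rw [Equiv.trans_apply, Equiv.swap_apply_def]
  simp only [apply_ite (Fin.val), Fin.ext_iff, bsw_apply, bswN]
  split_ifs <;> omega

lemma bsw_id {R s : ℕ} (h : s + 1 + 0 = R) :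
    pmat d R (bsw R s 1 0 h) = 1 := by
  rw [← pmat_refl (d := d) (R := R)]
  apply pmat_congr
  intro ℓ
  have hℓ := ℓ.isLt
  apply Fin.ext
  rw [bsw_apply]
  simp only [bswN, Equiv.refl_apply]
  split_ifs <;> omega

def eIcc (r : ℕ) : {x // x ∈ Finset.Icc 1 (r + 1)} ≃ Fin (r + 1) where
  toFun j := ⟨j.1 - 1, by have := Finset.mem_Icc.mp j.2; omega⟩
  invFun m := ⟨m.1 + 1, Finset.mem_Icc.mpr (by omega)⟩
  left_inv j := by
    have := Finset.mem_Icc.mp j.2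
    exact Subtype.ext (by simp; omega)
  right_inv m := Fin.ext (by simp)

lemma Tmat_eq (r : ℕ) :
    Tmat d (r + 1) = (((r + 1 : ℕ) : ℝ))⁻¹ •
      ∑ m : Fin (r + 1), pmat d (r + 1) (Equiv.swap m (Fin.last r)) := by
  rw [Tmat]
  congr 1
  have hsummand : ∀ j : {x // x ∈ Finset.Icc 1 (r + 1)},
      ((if h : j.1 = r + 1 then (1 : Matrix (Fin (d ^ (r+1))) (Fin (d ^ (r+1))) ℝ)
        else mcast
          (by
            have hj := Finset.mem_Icc.mp j.2
            rw [← pow_succ d (r + 1 - j.1 - 1), ← pow_add]; congr 1; omega)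
          (by
            have hj := Finset.mem_Icc.mp j.2
            rw [← pow_succ d (r + 1 - j.1 - 1), ← pow_add]; congr 1; omega)
          (kron (1 : Matrix (Fin (d ^ j.1)) (Fin (d ^ j.1)) ℝ)
            (commMat (d ^ (r + 1 - j.1 - 1)) d))) *
      mcast
        (by
          have hj := Finset.mem_Icc.mp j.2
          rw [← pow_succ' d (r + 1 - j.1), ← pow_add]; congr 1; omega)
        (by
          have hj := Finset.mem_Icc.mp j.2
          rw [← pow_succ' d (r + 1 - j.1), ← pow_add]; congr 1; omega)
        (kron (1 : Matrix (Fin (d ^ (j.1 - 1))) (Fin (d ^ (j.1 - 1)))  ℝ)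
          (commMat d (d ^ (r + 1 - j.1)))))
      = pmat d (r + 1) (Equiv.swap (eIcc r j) (Fin.last r)) := by
    intro j
    have hj := Finset.mem_Icc.mp j.2
    have hM2 : mcast (m := d ^ (j.1 - 1) * (d * d ^ (r + 1 - j.1)))
        (by rw [← pow_succ' d (r + 1 - j.1), ← pow_add]; congr 1; omega)
        (by rw [← pow_succ' d (r + 1 - j.1), ← pow_add]; congr 1; omega)
        (kron (1 : Matrix (Fin (d ^ (j.1 - 1))) (Fin (d ^ (j.1 - 1))) ℝ)
          (commMat d (d ^ (r + 1 - j.1))))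
        = pmat d (r + 1) (bsw (r + 1) (j.1 - 1) 1 (r + 1 - j.1) (by omega)) :=
      kron_one_comm (r + 1) (j.1 - 1) 1 (r + 1 - j.1) d (d ^ (r + 1 - j.1)) (by omega)
        (pow_one d).symm rfl _ _
    by_cases hjr : j.1 = r + 1
    · rw [dif_pos hjr, one_mul, hM2]
      have h0 : r + 1 - j.1 = 0 := by omega
      have he : (eIcc r j) = Fin.last r := Fin.ext (by simp [eIcc]; omega)
      rw [he, Equiv.swap_self]
      apply pmat_congr
      intro ℓ
      have hℓ := ℓ.isLt
      apply Fin.ext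
      rw [bsw_apply]
      simp only [bswN, Equiv.refl_apply]
      split_ifs <;> omega
    · rw [dif_neg hjr]
      have hM1 : mcast (m := d ^ j.1 * (d ^ (r + 1 - j.1 - 1) * d))
          (by rw [← pow_succ d (r + 1 - j.1 - 1), ← pow_add]; congr 1; omega)
          (by rw [← pow_succ d (r + 1 - j.1 - 1), ← pow_add]; congr 1; omega)
          (kron (1 : Matrix (Fin (d ^ j.1)) (Fin (d ^ j.1)) ℝ)
            (commMat (d ^ (r + 1 - j.1 - 1)) d))
          = pmat d (r + 1) (bsw (r + 1) j.1 (r + 1 - j.1 - 1) 1 (by omega)) :=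
        kron_one_comm (r + 1) j.1 (r + 1 - j.1 - 1) 1 (d ^ (r + 1 - j.1 - 1)) d (by omega)
          rfl (pow_one d).symm _ _
      have hsw : Equiv.swap (⟨j.1 - 1, by omega⟩ : Fin (r + 1)) ⟨r + 1 - 1, by omega⟩
          = Equiv.swap (eIcc r j) (Fin.last r) := by
        congr 1 <;> apply Fin.ext <;> simp [eIcc]
      rw [hM1, hM2, pmat_mul,
        bsw_trans_swap (by omega) (by omega) _ _ (by omega) (by omega), hsw]
  rw [Finset.sum_congr rfl (fun j _ => hsummand j)]
  rw [Finset.attach_eq_univ]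
  exact Fintype.sum_equiv (eIcc r) _ _ (fun j => rfl)

end SymRec

namespace SymRec

variable {d : ℕ} [NeZero d]

/-- Extend a permutation of `Fin r` to `Fin (r+1)` fixing the last element. -/
def extLast {r : ℕ} (σ : Equiv.Perm (Fin r)) : Equiv.Perm (Fin (r + 1)) where
  toFun ℓ := if h : ℓ.1 < r then (σ ⟨ℓ.1, h⟩).castSucc else ℓ
  invFun ℓ := if h : ℓ.1 < r then (σ⁻¹ ⟨ℓ.1, h⟩).castSucc else ℓ
  left_inv ℓ := by
    by_cases h : ℓ.1 < r
    · have h2 : ((σ ⟨ℓ.1, h⟩).castSucc).1 < r := (σ ⟨ℓ.1, h⟩).isLt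
      simp only [dif_pos h]
      simp only [dif_pos h2]
      have e : (⟨((σ ⟨ℓ.1, h⟩).castSucc).1, h2⟩ : Fin r) = σ ⟨ℓ.1, h⟩ := Fin.ext (by simp)
      rw [e, Equiv.Perm.coe_inv, Equiv.symm_apply_apply]
      exact Fin.ext (by simp)
    · simp only [dif_neg h]
  right_inv ℓ := by
    by_cases h : ℓ.1 < r
    · have h2 : ((σ⁻¹ ⟨ℓ.1, h⟩).castSucc).1 < r := (σ⁻¹ ⟨ℓ.1, h⟩).isLt
      simp only [dif_pos h]
      simp only [dif_pos h2]
      have e : (⟨((σ⁻¹ ⟨ℓ.1, h⟩).castSucc).1, h2⟩ : Fin r) = σ⁻¹ ⟨ℓ.1, h⟩ := Fin.ext (by simp)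
      rw [e, Equiv.Perm.coe_inv, Equiv.apply_symm_apply]
      exact Fin.ext (by simp)
    · simp only [dif_neg h]

lemma extLast_castSucc {r : ℕ} (σ : Equiv.Perm (Fin r)) (ℓ : Fin r) :
    extLast σ ℓ.castSucc = (σ ℓ).castSucc := by
  show (if h : (ℓ.castSucc).1 < r then (σ ⟨(ℓ.castSucc).1, h⟩).castSucc else ℓ.castSucc) = _
  rw [dif_pos (show (ℓ.castSucc).1 < r from ℓ.isLt)]
  rfl

lemma extLast_last {r : ℕ} (σ : Equiv.Perm (Fin r)) :
    extLast σ (Fin.last r) = Fin.last r := by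
  show (if h : (Fin.last r).1 < r then (σ ⟨(Fin.last r).1, h⟩).castSucc else Fin.last r) = _
  rw [dif_neg (by simp)]

lemma encN_one (f : ℕ → ℕ) : encN d 1 f = f 0 := by
  rw [encN_succ, encN_zero, Nat.zero_mul, Nat.zero_add]

lemma forall_succ_iff {r : ℕ} (P : Fin (r + 1) → Prop) :
    (∀ ℓ, P ℓ) ↔ (∀ ℓ : Fin r, P ℓ.castSucc) ∧ P (Fin.last r) := by
  constructor
  · intro h; exact ⟨fun ℓ => h _, h _⟩
  · rintro ⟨h1, h2⟩ ℓ
    exact Fin.lastCases h2 h1 ℓ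

lemma mcast_kron_pmat (r : ℕ) (σ : Equiv.Perm (Fin r)) (hm hn : d ^ r * d = d ^ (r + 1)) :
    mcast hm hn (kron (pmat d r σ) (1 : Matrix (Fin d) (Fin d) ℝ))
      = pmat d (r + 1) (extLast σ) := by
  apply mat_ext
  intro f g
  rw [pmat_en]
  simp only [mcast, Matrix.reindex_apply, Matrix.submatrix_apply, finCongr_symm, finCongr_apply,
    kron, Matrix.one_apply, Fin.mk.injEq, Fin.coe_cast]
  have hdiv : ∀ (f : Fin (r+1) → Fin d),
      (⟨(en f : ℕ) / d, Nat.div_lt_of_lt_mul (Nat.mul_comm (d ^ r) d ▸ (finCongr hm.symm (en f)).isLt)⟩ : Fin (d ^ r))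
      = en (fun ℓ : Fin r => f ℓ.castSucc) := by
    intro f
    apply Fin.ext
    show encN d (r+1) (fv f) / d = encN d r (fv (fun ℓ : Fin r => f ℓ.castSucc))
    have h1 : encN d (r+1) (fv f) / d ^ 1 = encN d r (fv f) := encN_div dpos r 1 (fv f) (fv_lt f)
    rw [pow_one] at h1
    rw [h1]
    apply encN_congr
    intro ℓ hℓ
    rw [fv_eq f (by omega), fv_eq _ hℓ]
    rfl
  have hmod : ∀ (f : Fin (r+1) → Fin d), (en f : ℕ) % d = (f (Fin.last r) : ℕ) := by
    intro f
    show encN d (r+1) (fv f) % d = _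
    have h1 : encN d (r+1) (fv f) % d ^ 1 = encN d 1 (fun ℓ => fv f (r + ℓ)) :=
      encN_mod dpos r 1 (fv f) (fv_lt f)
    rw [pow_one] at h1
    rw [h1, encN_one]
    have e : r + 0 = r := Nat.add_zero r
    rw [e, fv_eq f (Nat.lt_succ_self r)]
    rfl
  rw [hdiv f, hdiv g, hmod f, hmod g, pmat_en]
  rw [ite_mul, one_mul, zero_mul, ← ite_and]
  refine if_congr ?_ rfl rfl
  constructor
  · rintro ⟨h1, h2⟩
    rw [forall_succ_iff]
    refine ⟨fun ℓ => ?_, ?_⟩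
    · rw [extLast_castSucc]; exact h1 ℓ
    · rw [extLast_last]; exact Fin.ext h2
  · intro h
    rw [forall_succ_iff] at h
    obtain ⟨h1, h2⟩ := h
    refine ⟨fun ℓ => ?_, ?_⟩
    · have h3 := h1 ℓ; rwa [extLast_castSucc] at h3
    · rw [extLast_last] at h2; exact congrArg Fin.val h2

lemma kron_smul_sum {m n : ℕ} {ι : Type*} (s : Finset ι) (c : ℝ)
    (A : ι → Matrix (Fin (d ^ m)) (Fin (d ^ m)) ℝ) (B : Matrix (Fin n) (Fin n) ℝ) :
    kron (c • ∑ i ∈ s, A i) B = c • ∑ i ∈ s, kron (A i) B := by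
  funext x y
  simp only [kron, Matrix.smul_apply, Matrix.sum_apply, smul_eq_mul]
  rw [mul_assoc, Finset.sum_mul]

lemma mcast_smul_sum {m n m' n' : ℕ} (hm : m = m') (hn : n = n') {ι : Type*} (s : Finset ι)
    (c : ℝ) (A : ι → Matrix (Fin m) (Fin n) ℝ) :
    mcast hm hn (c • ∑ i ∈ s, A i) = c • ∑ i ∈ s, mcast hm hn (A i) := by
  funext x y
  simp only [mcast, Matrix.reindex_apply, Matrix.submatrix_apply, Matrix.smul_apply,
    Matrix.sum_apply]

lemma kron_symr (r : ℕ) (hm hn : d ^ r * d = d ^ (r + 1)) :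
    mcast hm hn (kron (symr d r) (1 : Matrix (Fin d) (Fin d) ℝ))
      = ((r.factorial : ℝ))⁻¹ • ∑ σ : Equiv.Perm (Fin r), pmat d (r + 1) (extLast σ) := by
  rw [symr_eq, kron_smul_sum, mcast_smul_sum]
  congr 1
  exact Finset.sum_congr rfl (fun σ _ => mcast_kron_pmat r σ hm hn)

end SymRec


/-- Theorem 1: `S_{d,r+1} = (S_{d,r} ⊗ I_d) T_{d,r+1}`. -/
theorem symmetrizer_recursion (d : ℕ) [NeZero d] (r : ℕ) :
    symr d (r + 1) =
      (mcast (pow_succ d r).symm (pow_succ d r).symm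
          (kron (symr d r) (1 : Matrix (Fin d) (Fin d) ℝ)) :
        Matrix (Fin (d ^ (r + 1))) (Fin (d ^ (r + 1))) ℝ) *
      Tmat d (r + 1) := by
  classical
  rw [SymRec.symr_eq (r + 1), SymRec.kron_symr r, SymRec.Tmat_eq r,
    Matrix.smul_mul, Matrix.mul_smul, smul_smul, Finset.sum_mul_sum]
  have hsc : ((r.factorial : ℝ))⁻¹ * (((r + 1 : ℕ) : ℝ))⁻¹ = (((r + 1).factorial : ℝ))⁻¹ := by
    rw [Nat.factorial_succ, Nat.cast_mul, mul_inv]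
    ring
  rw [hsc]
  congr 1
  simp_rw [SymRec.pmat_mul]
  rw [← Fintype.sum_prod_type']
  set Φ : Equiv.Perm (Fin r) × Fin (r + 1) → Equiv.Perm (Fin (r + 1)) :=
    fun p => (SymRec.extLast p.1).trans (Equiv.swap p.2 (Fin.last r)) with hΦ
  have hinj : Function.Injective Φ := by
    rintro ⟨σ, m⟩ ⟨σ', m'⟩ hp
    simp only [hΦ] at hp
    have hm2 : m = m' := by
      have h1 := congrArg (fun e => e (Fin.last r)) hp
      simp only [Equiv.trans_apply, SymRec.extLast_last, Equiv.swap_apply_right] at h1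
      exact h1
    subst hm2
    have hσ : σ = σ' := by
      apply Equiv.ext
      intro ℓ
      have h1 := congrArg (fun e => e ℓ.castSucc) hp
      simp only [Equiv.trans_apply, SymRec.extLast_castSucc] at h1
      have h2 := (Equiv.injective (Equiv.swap m (Fin.last r))) h1
      exact Fin.castSucc_injective r h2
    rw [hσ]
  have hbij : Function.Bijective Φ := by
    rw [Fintype.bijective_iff_injective_and_card]
    refine ⟨hinj, ?_⟩
    rw [Fintype.card_prod, Fintype.card_perm, Fintype.card_perm, Fintype.card_fin,
      Fintype.card_fin, Nat.factorial_succ, Nat.mul_comm]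
  exact (Fintype.sum_bijective Φ hbij _ _ (fun p => rfl)).symm
end

section
/- With T_{d,r} = (1/r) Σ_{j=1}^r (I_{d^j} ⊗ K_{d^{r−j−1},d})(I_{d^{j−1}} ⊗ K_{d,d^{r−j}}), for any r ≥ 1: (r+1) T_{d,r+1} = (I_{d^{r−1}} ⊗ K_{d,d})(r T_{d,r} ⊗ I_d)(I_{d^{r−1}} ⊗ K_{d,d}) + I_{d^{r−1}} ⊗ K_{d,d}. -/
open Matrix

section Aux

lemma div_eq' {Q X R : ℕ} (hR : R < Q) : (X * Q + R) / Q = X := by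
  have hQ : 0 < Q := lt_of_le_of_lt (Nat.zero_le R) hR
  rw [mul_comm, Nat.mul_add_div hQ, Nat.div_eq_of_lt hR, add_zero]

lemma mod_eq' {Q X R : ℕ} (hR : R < Q) : (X * Q + R) % Q = R := by
  rw [mul_comm, Nat.mul_add_mod, Nat.mod_eq_of_lt hR]

def step (u v z : ℕ) : ℕ :=
  z / (u * v) * (u * v) + z % (u * v) / u + z % (u * v) % u * v

lemma step_eval {u v : ℕ} (X R1 R2 : ℕ) (h1 : R1 < v) (h2 : R2 < u) :
    step u v (X * (u * v) + R1 * u + R2) = X * (u * v) + R1 + R2 * v := by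
  have hu : 0 < u := lt_of_le_of_lt (Nat.zero_le _) h2
  have hR : R1 * u + R2 < u * v := by nlinarith
  have e0 : X * (u * v) + R1 * u + R2 = X * (u * v) + (R1 * u + R2) := by ring
  unfold step
  rw [e0, div_eq' hR, mod_eq' hR, div_eq' h2, mod_eq' h2]

lemma step_lt {u v N : ℕ} (hu : 0 < u) (hv : 0 < v) (hdvd : u * v ∣ N) {y : ℕ}
    (hy : y < N) : step u v y < N := by
  have huv : 0 < u * v := Nat.mul_pos hu hv
  have h1 : y % (u * v) / u < v := Nat.div_lt_of_lt_mul (Nat.mod_lt _ huv)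
  have h2 : y % (u * v) % u < u := Nat.mod_lt _ hu
  have h3 : y / (u * v) < N / (u * v) := Nat.div_lt_div_of_lt_of_dvd hdvd hy
  have h4 : N / (u * v) * (u * v) = N := Nat.div_mul_cancel hdvd
  have h5 : (y / (u * v) + 1) * (u * v) ≤ N / (u * v) * (u * v) :=
    Nat.mul_le_mul_right _ h3
  have h6 : (y % (u * v) % u + 1) * v ≤ u * v :=
    Nat.mul_le_mul_right _ (Nat.succ_le_of_lt h2)
  have h7 : y / (u * v) * (u * v) + u * v ≤ N := by nlinarith
  unfold step
  nlinarith

lemma step_one_left (v z : ℕ) : step 1 v z = z := by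
  unfold step
  simp [Nat.mod_one]
  exact Nat.div_add_mod' z v

lemma step_one_right {u : ℕ} (hu : 0 < u) (z : ℕ) : step u 1 z = z := by
  unfold step
  rw [mul_one, Nat.div_eq_of_lt (Nat.mod_lt z hu), add_zero,
    Nat.mod_mod_of_dvd z (dvd_refl u), mul_one]
  exact Nat.div_add_mod' z u

lemma step_dd_invol {d : ℕ} (hd : 0 < d) (y : ℕ) : step d d (step d d y) = y := by
  have hq : 0 < d * d := Nat.mul_pos hd hd
  have hR1 : y % (d * d) / d < d := Nat.div_lt_of_lt_mul (Nat.mod_lt _ hq)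
  have hR2 : y % (d * d) % d < d := Nat.mod_lt _ hd
  have h0 : step d d y = y / (d * d) * (d * d) + (y % (d * d) % d) * d + y % (d * d) / d := by
    unfold step; ring
  rw [h0, step_eval _ _ _ hR2 hR1]
  calc y / (d * d) * (d * d) + y % (d * d) % d + y % (d * d) / d * d
      = y / (d * d) * (d * d) + (y % (d * d) / d * d + y % (d * d) % d) := by ring
    _ = y / (d * d) * (d * d) + y % (d * d) := by rw [Nat.div_add_mod']
    _ = y := Nat.div_add_mod' y (d * d)

end Aux

def pmat (N : ℕ) (f : ℕ → ℕ) : Matrix (Fin N) (Fin N) ℝ := fun a b =>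
  if (a : ℕ) = f (b : ℕ) then 1 else 0

lemma pmat_mul {N : ℕ} (f g : ℕ → ℕ) (hg : ∀ y, y < N → g y < N) :
    pmat N f * pmat N g = pmat N (fun y => f (g y)) := by
  ext a b
  rw [Matrix.mul_apply]
  rw [Finset.sum_eq_single (⟨g b.1, hg b.1 b.2⟩ : Fin N)]
  · simp [pmat]
  · intro c _ hc
    have hcc : (c : ℕ) ≠ g (b : ℕ) := fun h => hc (Fin.ext h)
    simp [pmat, hcc]
  · intro h; exact absurd (Finset.mem_univ _) h

lemma pmat_congr {N : ℕ} {f g : ℕ → ℕ} (h : ∀ y, y < N → f y = g y) :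
    pmat N f = pmat N g := by
  ext a b
  simp [pmat, h b.1 b.2]

lemma kron_one_comm {m u v N : ℕ} (hu : 0 < u) (hv : 0 < v) (h h' : m * (u * v) = N) :
    mcast h h' (kron (1 : Matrix (Fin m) (Fin m) ℝ) (commMat u v)) = pmat N (step u v) := by
  ext a b
  simp only [mcast, Matrix.reindex_apply, Matrix.submatrix_apply, finCongr_symm,
    finCongr_apply, kron, commMat, pmat, Matrix.one_apply, Fin.coe_cast, Fin.mk.injEq]
  have huv : 0 < u * v := Nat.mul_pos hu hv
  have hV : (b : ℕ) % (u * v) / u + (b : ℕ) % (u * v) % u * v < u * v := by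
    have h1 : (b : ℕ) % (u * v) / u < v := Nat.div_lt_of_lt_mul (Nat.mod_lt _ huv)
    have h2 : (b : ℕ) % (u * v) % u < u := Nat.mod_lt _ hu
    have h6 : ((b : ℕ) % (u * v) % u + 1) * v ≤ u * v :=
      Nat.mul_le_mul_right _ (Nat.succ_le_of_lt h2)
    nlinarith
  have key : ((a : ℕ) / (u * v) = (b : ℕ) / (u * v) ∧
      (a : ℕ) % (u * v) = (b : ℕ) % (u * v) / u + (b : ℕ) % (u * v) % u * v)
      ↔ (a : ℕ) = step u v (b : ℕ) := by
    unfold step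
    constructor
    · rintro ⟨h1, h2⟩
      rw [add_assoc, ← h1, ← h2]
      exact (Nat.div_add_mod' _ (u * v)).symm
    · intro hE
      rw [add_assoc] at hE
      exact ⟨by rw [hE, div_eq' hV], by rw [hE, mod_eq' hV]⟩
  simp only [← key]
  by_cases h1 : (a : ℕ) / (u * v) = (b : ℕ) / (u * v) <;>
    by_cases h2 : (a : ℕ) % (u * v) = (b : ℕ) % (u * v) / u + (b : ℕ) % (u * v) % u * v <;>
    simp [h1, h2]

lemma kron_pmat_one {M d N : ℕ} (hd : 0 < d) (h h' : M * d = N) (f : ℕ → ℕ) :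
    mcast h h' (kron (pmat M f) (1 : Matrix (Fin d) (Fin d) ℝ)) =
      pmat N (fun y => f (y / d) * d + y % d) := by
  ext a b
  simp only [mcast, Matrix.reindex_apply, Matrix.submatrix_apply, finCongr_symm,
    finCongr_apply, kron, pmat, Matrix.one_apply, Fin.coe_cast, Fin.mk.injEq]
  have key : ((a : ℕ) / d = f ((b : ℕ) / d) ∧ (a : ℕ) % d = (b : ℕ) % d)
      ↔ (a : ℕ) = f ((b : ℕ) / d) * d + (b : ℕ) % d := by
    constructor
    · rintro ⟨h1, h2⟩
      rw [← h1, ← h2]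
      exact (Nat.div_add_mod' _ d).symm
    · intro hE
      have hb : (b : ℕ) % d < d := Nat.mod_lt _ hd
      exact ⟨by rw [hE, div_eq' hb], by rw [hE, mod_eq' hb]⟩
  simp only [← key]
  by_cases h1 : (a : ℕ) / d = f ((b : ℕ) / d) <;>
    by_cases h2 : (a : ℕ) % d = (b : ℕ) % d <;> simp [h1, h2]

lemma kron_sum_one {M d : ℕ} {ι : Type*} (s : Finset ι)
    (F : ι → Matrix (Fin M) (Fin M) ℝ) :
    kron (∑ i ∈ s, F i) (1 : Matrix (Fin d) (Fin d) ℝ) = ∑ i ∈ s, kron (F i) 1 := by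
  ext a b
  simp [kron, Matrix.sum_apply, Finset.sum_mul]

lemma mcast_sum {m n m' n' : ℕ} (hm : m = m') (hn : n = n') {ι : Type*} (s : Finset ι)
    (F : ι → Matrix (Fin m) (Fin n) ℝ) :
    mcast hm hn (∑ i ∈ s, F i) = ∑ i ∈ s, mcast hm hn (F i) := by
  ext a b
  simp [mcast, Matrix.sum_apply]

lemma Tmat_sum (d n : ℕ) (hd : 0 < d) (hn : 1 ≤ n) :
    (n : ℝ) • Tmat d n =
      ∑ j ∈ Finset.Icc 1 n,
        pmat (d ^ n) (fun y => step (d ^ (n - j - 1)) d (step d (d ^ (n - j)) y)) := by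
  unfold Tmat
  rw [smul_smul, mul_inv_cancel₀ (Nat.cast_ne_zero.mpr (by omega)), one_smul]
  rw [← Finset.sum_attach (Finset.Icc 1 n)
      (fun j => pmat (d ^ n) (fun y => step (d ^ (n - j - 1)) d (step d (d ^ (n - j)) y)))]
  refine Finset.sum_congr rfl fun j _ => ?_
  have hj := Finset.mem_Icc.mp j.2
  rw [kron_one_comm hd (pow_pos hd _)]
  have hbd : ∀ y, y < d ^ n → step d (d ^ (n - j.1)) y < d ^ n := fun y hy =>
    step_lt hd (pow_pos hd _) (by rw [← pow_succ']; exact pow_dvd_pow d (by omega)) hy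
  by_cases hjn : j.1 = n
  · rw [dif_pos hjn, one_mul]
    refine pmat_congr fun y hy => ?_
    rw [show n - j.1 - 1 = 0 by omega, pow_zero, step_one_left]
  · rw [dif_neg hjn, kron_one_comm (pow_pos hd _) hd, pmat_mul _ _ hbd]

lemma core_swap {d M : ℕ} (hd : 0 < d) (hM : 0 < M) (A c B f e : ℕ)
    (hc : c < d) (hB : B < M) (hf : f < d) (he : e < d) :
    step (M * d) d (step d (M * d * d) ((((A * d + c) * M + B) * d + f) * d + e)) =
      step d d
        (step M d (step d (M * d)
            (step d d ((((A * d + c) * M + B) * d + f) * d + e) / d)) * d +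
          step d d ((((A * d + c) * M + B) * d + f) * d + e) % d) := by
  have hcB : c * M + B < M * d := by nlinarith
  have hBf : B * d + f < M * d := by nlinarith
  have h1 : (c * M + B) * d + f < M * d * d := by nlinarith
  have hL1 : step d (M * d * d) ((((A * d + c) * M + B) * d + f) * d + e)
      = A * (d * (M * d * d)) + ((c * M + B) * d + f) + e * (M * d * d) := by
    rw [show (((A * d + c) * M + B) * d + f) * d + e
        = A * (d * (M * d * d)) + ((c * M + B) * d + f) * d + e by ring]
    exact step_eval _ _ _ h1 he
  have hL2 : step (M * d) d (A * (d * (M * d * d)) + ((c * M + B) * d + f) + e * (M * d * d))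
      = (A * d + e) * (M * d * d) + c + (B * d + f) * d := by
    rw [show A * (d * (M * d * d)) + ((c * M + B) * d + f) + e * (M * d * d)
        = (A * d + e) * (M * d * d) + c * (M * d) + (B * d + f) by ring]
    exact step_eval _ _ _ hc hBf
  have hR1 : step d d ((((A * d + c) * M + B) * d + f) * d + e)
      = ((A * d + c) * M + B) * (d * d) + f + e * d := by
    rw [show (((A * d + c) * M + B) * d + f) * d + e
        = ((A * d + c) * M + B) * (d * d) + f * d + e by ring]
    exact step_eval _ _ _ hf he
  have hRdiv : (((A * d + c) * M + B) * (d * d) + f + e * d) / d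
      = ((A * d + c) * M + B) * d + e := by
    rw [show ((A * d + c) * M + B) * (d * d) + f + e * d
        = (((A * d + c) * M + B) * d + e) * d + f by ring]
    exact div_eq' hf
  have hRmod : (((A * d + c) * M + B) * (d * d) + f + e * d) % d = f := by
    rw [show ((A * d + c) * M + B) * (d * d) + f + e * d
        = (((A * d + c) * M + B) * d + e) * d + f by ring]
    exact mod_eq' hf
  have hR2 : step d (M * d) (((A * d + c) * M + B) * d + e)
      = A * (d * (M * d)) + (c * M + B) + e * (M * d) := by
    rw [show ((A * d + c) * M + B) * d + e
        = A * (d * (M * d)) + (c * M + B) * d + e by ring]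
    exact step_eval _ _ _ hcB he
  have hR3 : step M d (A * (d * (M * d)) + (c * M + B) + e * (M * d))
      = (A * d + e) * (M * d) + c + B * d := by
    rw [show A * (d * (M * d)) + (c * M + B) + e * (M * d)
        = (A * d + e) * (M * d) + c * M + B by ring]
    exact step_eval _ _ _ hc hB
  have hR4 : step d d (((A * d + e) * (M * d) + c + B * d) * d + f)
      = ((A * d + e) * M + B) * (d * d) + c + f * d := by
    rw [show ((A * d + e) * (M * d) + c + B * d) * d + f
        = ((A * d + e) * M + B) * (d * d) + c * d + f by ring]
    exact step_eval _ _ _ hc hf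
  rw [hL1, hL2, hR1, hRdiv, hRmod, hR2, hR3, hR4]
  ring

lemma decomp (d M P y : ℕ) (hd : 0 < d) (hM : 0 < M)
    (hy : y < P * (d * (M * (d * d)))) :
    ∃ A c B f e, A < P ∧ c < d ∧ B < M ∧ f < d ∧ e < d ∧
      y = (((A * d + c) * M + B) * d + f) * d + e := by
  refine ⟨y / (d * d * M * d), y / (d * d * M) % d, y / (d * d) % M, y / d % d, y % d,
    ?_, Nat.mod_lt _ hd, Nat.mod_lt _ hM, Nat.mod_lt _ hd, Nat.mod_lt _ hd, ?_⟩
  · rw [Nat.div_lt_iff_lt_mul (by positivity)]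
    calc y < P * (d * (M * (d * d))) := hy
      _ = P * (d * d * M * d) := by ring
  · have e2 : y / d / d = y / (d * d) := Nat.div_div_eq_div_mul y d d
    have e3 : y / (d * d) / M = y / (d * d * M) := Nat.div_div_eq_div_mul _ _ _
    have e4 : y / (d * d * M) / d = y / (d * d * M * d) := Nat.div_div_eq_div_mul _ _ _
    have key : (((y / (d * d * M * d) * d + y / (d * d * M) % d) * M + y / (d * d) % M) * d
        + y / d % d) * d + y % d = y := by
      rw [show y / (d * d * M * d) * d + y / (d * d * M) % d = y / (d * d * M) from by
        rw [← e4]; exact Nat.div_add_mod' _ d]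
      rw [show y / (d * d * M) * M + y / (d * d) % M = y / (d * d) from by
        rw [← e3]; exact Nat.div_add_mod' _ M]
      rw [show y / (d * d) * d + y / d % d = y / d from by
        rw [← e2]; exact Nat.div_add_mod' _ d]
      exact Nat.div_add_mod' y d
    exact key.symm

/-- Theorem 2: for `r ≥ 1`,
`(r+1) T_{d,r+1} = (I_{d^{r−1}} ⊗ K_{d,d})(r T_{d,r} ⊗ I_d)(I_{d^{r−1}} ⊗ K_{d,d})
  + I_{d^{r−1}} ⊗ K_{d,d}`. -/
theorem Tmat_recursion (d r : ℕ) (hr : 1 ≤ r) :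
    ((r : ℝ) + 1) • Tmat d (r + 1) =
      (mcast (by rw [show d * d = d ^ 2 from (sq d).symm, ← pow_add]; congr 1; omega) (by rw [show d * d = d ^ 2 from (sq d).symm, ← pow_add]; congr 1; omega)
          (kron (1 : Matrix (Fin (d ^ (r - 1))) (Fin (d ^ (r - 1))) ℝ) (commMat d d)) :
        Matrix (Fin (d ^ (r + 1))) (Fin (d ^ (r + 1))) ℝ) *
      (mcast (pow_succ d r).symm (pow_succ d r).symm
          (kron ((r : ℝ) • Tmat d r) (1 : Matrix (Fin d) (Fin d) ℝ)) :
        Matrix (Fin (d ^ (r + 1))) (Fin (d ^ (r + 1))) ℝ) *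
      (mcast (by rw [show d * d = d ^ 2 from (sq d).symm, ← pow_add]; congr 1; omega) (by rw [show d * d = d ^ 2 from (sq d).symm, ← pow_add]; congr 1; omega)
          (kron (1 : Matrix (Fin (d ^ (r - 1))) (Fin (d ^ (r - 1))) ℝ) (commMat d d)) :
        Matrix (Fin (d ^ (r + 1))) (Fin (d ^ (r + 1))) ℝ) +
      (mcast (by rw [show d * d = d ^ 2 from (sq d).symm, ← pow_add]; congr 1; omega) (by rw [show d * d = d ^ 2 from (sq d).symm, ← pow_add]; congr 1; omega)
          (kron (1 : Matrix (Fin (d ^ (r - 1))) (Fin (d ^ (r - 1))) ℝ) (commMat d d)) :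
        Matrix (Fin (d ^ (r + 1))) (Fin (d ^ (r + 1))) ℝ) := by
  obtain ⟨s, rfl⟩ : ∃ s, r = s + 1 := ⟨r - 1, by omega⟩
  rcases Nat.eq_zero_or_pos d with hd | hd
  · subst hd
    ext a b
    exact absurd a.isLt (by simp)
  · have hcast : ((s + 1 : ℕ) : ℝ) + 1 = ((s + 1 + 1 : ℕ) : ℝ) := by push_cast; ring
    rw [hcast, Tmat_sum d (s + 1 + 1) hd (by omega), Tmat_sum d (s + 1) hd (by omega),
      kron_sum_one, mcast_sum]
    simp only [kron_one_comm hd hd, kron_pmat_one hd]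
    rw [Finset.mul_sum, Finset.sum_mul]
    set N := d ^ (s + 1 + 1) with hN
    have hσb : ∀ y, y < N → step d d y < N := fun y hy =>
      step_lt hd hd ⟨d ^ s, by rw [hN]; ring⟩ hy
    have hLb : ∀ j, 1 ≤ j → ∀ y, y < N →
        step (d ^ (s + 1 - j - 1)) d (step d (d ^ (s + 1 - j)) (y / d)) * d + y % d < N := by
      intro j hj y hy
      have hy' : y / d < d ^ (s + 1) :=
        Nat.div_lt_of_lt_mul ((pow_succ' d (s + 1)) ▸ hy)
      have h1 : step d (d ^ (s + 1 - j)) (y / d) < d ^ (s + 1) :=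
        step_lt hd (pow_pos hd _) (by rw [← pow_succ']; exact pow_dvd_pow d (by omega)) hy'
      have h2 : step (d ^ (s + 1 - j - 1)) d (step d (d ^ (s + 1 - j)) (y / d)) < d ^ (s + 1) :=
        step_lt (pow_pos hd _) hd (by rw [← pow_succ]; exact pow_dvd_pow d (by omega)) h1
      have h3 : y % d < d := Nat.mod_lt _ hd
      have h4 : (step (d ^ (s + 1 - j - 1)) d (step d (d ^ (s + 1 - j)) (y / d)) + 1) * d
          ≤ d ^ (s + 1) * d := Nat.mul_le_mul_right _ h2
      have h5 : N = d ^ (s + 1) * d := pow_succ d (s + 1)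
      rw [h5]
      nlinarith
    rw [show (∑ i ∈ Finset.Icc 1 (s + 1),
          (pmat N (step d d) *
              pmat N fun y =>
                step (d ^ (s + 1 - i - 1)) d (step d (d ^ (s + 1 - i)) (y / d)) * d + y % d) *
            pmat N (step d d))
        = ∑ i ∈ Finset.Icc 1 (s + 1),
            pmat N (fun y => step d d
              (step (d ^ (s + 1 - i - 1)) d (step d (d ^ (s + 1 - i)) (step d d y / d)) * d
                + step d d y % d)) from
      Finset.sum_congr rfl fun i hi => by
        rw [pmat_mul _ _ (hLb i (Finset.mem_Icc.mp hi).1), pmat_mul _ _ hσb]]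
    rw [Finset.sum_Icc_succ_top (by omega : 1 ≤ s + 1 + 1),
      Finset.sum_Icc_succ_top (by omega : 1 ≤ s + 1),
      Finset.sum_Icc_succ_top (by omega : 1 ≤ s + 1)]
    have e1 : (∑ j ∈ Finset.Icc 1 s,
          pmat N fun y => step (d ^ (s + 1 + 1 - j - 1)) d (step d (d ^ (s + 1 + 1 - j)) y))
        = ∑ j ∈ Finset.Icc 1 s,
          pmat N fun y =>
            step d d (step (d ^ (s + 1 - j - 1)) d (step d (d ^ (s + 1 - j)) (step d d y / d)) * d
              + step d d y % d) := by
      refine Finset.sum_congr rfl fun j hj => ?_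
      obtain ⟨hj1, hj2⟩ := Finset.mem_Icc.mp hj
      refine pmat_congr fun y hy => ?_
      have hM1 : d ^ (s + 1 + 1 - j - 1) = d ^ (s - j) * d := by
        rw [← pow_succ]; congr 1; omega
      have hM2 : d ^ (s + 1 + 1 - j) = d ^ (s - j) * d * d := by
        rw [← pow_succ, ← pow_succ]; congr 1; omega
      have hM3 : d ^ (s + 1 - j - 1) = d ^ (s - j) := by congr 1; omega
      have hM4 : d ^ (s + 1 - j) = d ^ (s - j) * d := by
        rw [← pow_succ]; congr 1; omega
      rw [hM1, hM2, hM3, hM4]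
      have hyN : y < d ^ (j - 1) * (d * (d ^ (s - j) * (d * d))) := by
        refine lt_of_lt_of_le hy (le_of_eq ?_)
        rw [hN]
        calc d ^ (s + 1 + 1) = d ^ ((j - 1) + (1 + ((s - j) + 2))) := by congr 1; omega
          _ = d ^ (j - 1) * (d ^ 1 * (d ^ (s - j) * d ^ 2)) := by
              rw [pow_add, pow_add, pow_add]
          _ = d ^ (j - 1) * (d * (d ^ (s - j) * (d * d))) := by ring
      obtain ⟨A, c, B, f, e, hA, hc, hB, hf, he, rfl⟩ :=
        decomp d (d ^ (s - j)) (d ^ (j - 1)) y hd (pow_pos hd _) hyN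
      exact core_swap hd (pow_pos hd _) A c B f e hc hB hf he
    have e2 : (pmat N fun y =>
          step (d ^ (s + 1 + 1 - (s + 1) - 1)) d (step d (d ^ (s + 1 + 1 - (s + 1))) y))
        = pmat N (step d d) := by
      refine pmat_congr fun y hy => ?_
      rw [show s + 1 + 1 - (s + 1) - 1 = 0 by omega, show s + 1 + 1 - (s + 1) = 1 by omega,
        pow_zero, pow_one, step_one_left]
    have e3 : (pmat N fun y =>
          step (d ^ (s + 1 + 1 - (s + 1 + 1) - 1)) d (step d (d ^ (s + 1 + 1 - (s + 1 + 1))) y))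
        = pmat N fun y =>
          step d d (step (d ^ (s + 1 - (s + 1) - 1)) d
              (step d (d ^ (s + 1 - (s + 1))) (step d d y / d)) * d + step d d y % d) := by
      refine pmat_congr fun y hy => ?_
      rw [show s + 1 + 1 - (s + 1 + 1) - 1 = 0 by omega,
        show s + 1 + 1 - (s + 1 + 1) = 0 by omega,
        show s + 1 - (s + 1) - 1 = 0 by omega, show s + 1 - (s + 1) = 0 by omega,
        pow_zero, step_one_left, step_one_right hd, step_one_left, step_one_right hd,
        Nat.div_add_mod' (step d d y) d, step_dd_invol hd]
    rw [e1, e2, e3]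
    abel
end

section
/- If F_1 = AΣ and F_2 = BΣ commute (F_1 F_2 = F_2 F_1), then the joint cumulant simplifies to κ_{r,s}(A,B) = 2^{r+s−1}(r+s−1)! { tr(F_1^r F_2^s) + (r+s) tr(F_1^r F_2^s Σ^{−1} μ μᵀ) }. -/
open Matrix

theorem aux_card_filter_univ (n : ℕ) (p : Fin n → Prop) [DecidablePred p] :
    (Finset.univ.filter p).card = List.countP (fun x => decide (p x)) (List.finRange n) := by
  rw [Finset.filter, Finset.card]
  show Multiset.card (Multiset.filter p ((List.finRange n : List (Fin n)) : Multiset (Fin n))) = _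
  rw [Multiset.filter_coe, Multiset.coe_card, ← List.countP_eq_length_filter]

theorem aux_count_map (n : ℕ) (i : Fin n → Fin 2) :
    ((List.finRange n).map i).count (0:Fin 2) = (Finset.univ.filter fun ℓ => i ℓ = 0).card := by
  rw [List.count_eq_countP, List.countP_map, aux_card_filter_univ]
  congr 1

theorem aux_count_sum (l : List (Fin 2)) : l.count 0 + l.count 1 = l.length := by
  induction l with
  | nil => simp
  | cons a l ih =>
    rcases Fin.exists_fin_two.mp ⟨a, rfl⟩ with rfl | rfl <;>
      simp [List.count_cons, ← ih] <;> omega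

theorem aux_prod_map_two {M : Type*} [Monoid M] (F G : M) (h : Commute F G) :
    ∀ l : List (Fin 2), (l.map ![F, G]).prod = F ^ (l.count 0) * G ^ (l.count 1)
  | [] => by simp
  | (a :: l) => by
    rcases Fin.exists_fin_two.mp ⟨a, rfl⟩ with rfl | rfl
    · simp only [List.map_cons, List.prod_cons, aux_prod_map_two F G h l, List.count_cons]
      simp [pow_succ', mul_assoc]
    · simp only [List.map_cons, List.prod_cons, aux_prod_map_two F G h l, List.count_cons]
      simp only [Fin.one_eq_zero_iff, OfNat.ofNat_ne_one, ne_eq, not_false_eq_true,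
        if_false, if_true, Matrix.cons_val_one, Matrix.head_cons, if_neg, add_zero, Matrix.cons_val_zero]
      rw [← mul_assoc, (h.symm.pow_right _).eq, mul_assoc, ← pow_succ']
      simp [if_pos]

/-- `MP r s`: sequences in `{1,2}^{r+s}` (encoded as functions to `Fin 2`, `0 ↔ 1`,
`1 ↔ 2`) with exactly `r` ones and `s` twos. -/
def MPset (r s : ℕ) : Finset (Fin (r + s) → Fin 2) :=
  Finset.univ.filter fun i => (Finset.univ.filter fun ℓ => i ℓ = 0).card = r

theorem aux_MPset_card (r s : ℕ) : (MPset r s).card = (r + s).choose r := by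
  have h := Finset.card_powersetCard r (Finset.univ : Finset (Fin (r + s)))
  rw [Finset.card_univ, Fintype.card_fin] at h
  rw [← h]
  refine Finset.card_bij' (fun i _ => Finset.univ.filter fun ℓ => i ℓ = 0)
    (fun t _ => fun ℓ => if ℓ ∈ t then 0 else 1) ?_ ?_ ?_ ?_
  · intro i hi
    simp only [MPset, Finset.mem_filter, Finset.mem_univ, true_and] at hi
    simp [Finset.mem_powersetCard, hi]
  · intro t ht
    simp only [Finset.mem_powersetCard] at ht
    simp only [MPset, Finset.mem_filter, Finset.mem_univ, true_and]
    have he : (Finset.univ.filter fun ℓ => (if ℓ ∈ t then (0:Fin 2) else 1) = 0) = t := by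
      ext ℓ
      simp only [Finset.mem_filter, Finset.mem_univ, true_and]
      by_cases hℓ : ℓ ∈ t <;> simp [hℓ]
    rw [he, ht.2]
  · intro i hi
    funext ℓ
    by_cases hℓ : i ℓ = 0
    · simp [hℓ]
    · simp only [Finset.mem_filter, Finset.mem_univ, true_and, hℓ, if_false]
      omega
  · intro t ht
    ext ℓ
    simp only [Finset.mem_filter, Finset.mem_univ, true_and]
    by_cases hℓ : ℓ ∈ t <;> simp [hℓ]

/-- The joint `(r,s)`-cumulant of `XᵀAX` and `XᵀBX` for `X ~ N_d(μ,Σ)`: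
`κ_{r,s}(A,B) = 2^{r+s−1} r! s! Σ_{i ∈ MP_{r,s}} tr[F_{i₁} ⋯ F_{i_{r+s}}
  {I_d/(r+s) + Σ^{−1}μμᵀ}]`, with `F₁ = AΣ`, `F₂ = BΣ`. -/
noncomputable def jointCumulant {d : ℕ} (A B S : Matrix (Fin d) (Fin d) ℝ)
    (μ : Fin d → ℝ) (r s : ℕ) : ℝ :=
  2 ^ (r + s - 1) * r.factorial * s.factorial *
    ∑ i ∈ MPset r s,
      ((((List.finRange (r + s)).map (fun ℓ => ![A * S, B * S] (i ℓ))).prod) *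
        (((r + s : ℕ) : ℝ)⁻¹ • (1 : Matrix (Fin d) (Fin d) ℝ) +
          S⁻¹ * vecMulVec μ μ)).trace

/-- if `F₁ = AΣ` and `F₂ = BΣ` commute, then the joint cumulant
simplifies to
`κ_{r,s}(A,B) = 2^{r+s−1}(r+s−1)! { tr(F₁^r F₂^s) + (r+s) tr(F₁^r F₂^s Σ^{−1}μμᵀ) }`. -/
theorem joint_cumulant_commuting (d : ℕ) (A B S : Matrix (Fin d) (Fin d) ℝ)
    (μ : Fin d → ℝ) (hS : S.PosDef) (hA : A.IsSymm) (hB : B.IsSymm)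
    (hcomm : (A * S) * (B * S) = (B * S) * (A * S))
    (r s : ℕ) (hrs : 1 ≤ r + s) :
    jointCumulant A B S μ r s =
      2 ^ (r + s - 1) * (r + s - 1).factorial *
        (((A * S) ^ r * (B * S) ^ s).trace +
          (r + s : ℕ) * ((A * S) ^ r * (B * S) ^ s * S⁻¹ * vecMulVec μ μ).trace) := by
  set n := r + s with hn
  set F := A * S
  set G := B * S
  -- each product equals F^r * G^s
  have hprod : ∀ i ∈ MPset r s,
      ((List.finRange n).map (fun ℓ => ![F, G] (i ℓ))).prod = F ^ r * G ^ s := by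
    intro i hi
    simp only [MPset, Finset.mem_filter, Finset.mem_univ, true_and] at hi
    have hmap : (List.finRange n).map (fun ℓ => ![F, G] (i ℓ))
        = ((List.finRange n).map i).map ![F, G] := by
      rw [List.map_map]
      rfl
    rw [hmap, aux_prod_map_two F G hcomm]
    have h0 : ((List.finRange n).map i).count (0:Fin 2) = r := by
      rw [aux_count_map]; exact hi
    have hsum := aux_count_sum ((List.finRange n).map i)
    rw [h0] at hsum
    simp only [List.length_map, List.length_finRange] at hsum
    have h1 : ((List.finRange n).map i).count (1:Fin 2) = s := by omega
    rw [h0, h1]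
  -- rewrite sum as constant
  rw [jointCumulant]
  rw [Finset.sum_congr rfl (fun i hi => by rw [hprod i hi])]
  rw [Finset.sum_const, aux_MPset_card, nsmul_eq_mul]
  -- trace of the product
  have htr : (F ^ r * G ^ s *
      (((n : ℕ) : ℝ)⁻¹ • (1 : Matrix (Fin d) (Fin d) ℝ) + S⁻¹ * vecMulVec μ μ)).trace
      = ((n:ℕ):ℝ)⁻¹ * (F ^ r * G ^ s).trace + (F ^ r * G ^ s * S⁻¹ * vecMulVec μ μ).trace := by
    rw [mul_add, trace_add, Matrix.mul_smul, mul_one, trace_smul, smul_eq_mul]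
    simp only [mul_assoc]
  rw [htr]
  -- arithmetic
  have hfact : (n.choose r) * r.factorial * s.factorial = n.factorial := by
    have := Nat.choose_mul_factorial_mul_factorial (Nat.le_add_right r s)
    simpa [hn] using this
  have hnf : n * (n - 1).factorial = n.factorial := Nat.mul_factorial_pred (by omega)
  have hne : ((n:ℕ):ℝ) ≠ 0 := by positivity
  have hfR : ((n.choose r : ℕ) : ℝ) * (r.factorial : ℝ) * (s.factorial : ℝ)
      = ((n:ℕ):ℝ) * ((n-1).factorial : ℝ) := by
    rw [← Nat.cast_mul, ← Nat.cast_mul, hfact, ← hnf]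
    push_cast
    ring
  set T1 := (F ^ r * G ^ s).trace
  set T2 := (F ^ r * G ^ s * S⁻¹ * vecMulVec μ μ).trace
  have : (2:ℝ) ^ (n - 1) * r.factorial * s.factorial * ((n.choose r : ℕ) * (((n:ℕ):ℝ)⁻¹ * T1 + T2))
      = 2 ^ (n - 1) * ((n-1).factorial : ℝ) * (T1 + ((n:ℕ):ℝ) * T2) := by
    have h1 : (2:ℝ) ^ (n - 1) * r.factorial * s.factorial * ((n.choose r : ℕ) * (((n:ℕ):ℝ)⁻¹ * T1 + T2))
        = 2 ^ (n - 1) * (((n.choose r : ℕ) : ℝ) * (r.factorial : ℝ) * (s.factorial : ℝ)) * ((((n:ℕ):ℝ))⁻¹ * T1 + T2) := by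
      ring
    rw [h1, hfR]
    field_simp
  exact this
end
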